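/- arXiv:1607.01843 — 2 statements merged into one kernel-verified Lean document; each statement's English description precedes it below -/
import Mathlib

section
/- Let f be analytic on the unit disk with f(0)=0, f'(0)=1, satisfying Re[(1-z^2)f'(z)] > 0 for all |z|<1. Then the first logarithmic coefficient γ_1 = a_2/2 satisfies |γ_1| ≤ 1/2, and the bound is sharp. -/
open Metric Complex

lemma cara {p : ℂ → ℂ} (hp : DifferentiableOn ℂ p (ball 0 1)) (h0 : p 0 = 1)
    (hre : ∀ z ∈ ball (0:ℂ) 1, 0 < (p z).re) : ‖deriv p 0‖ ≤ 2 := by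
  set g : ℂ → ℂ := fun z => (p z - 1) / (p z + 1) with hg
  have hne : ∀ z ∈ ball (0:ℂ) 1, p z + 1 ≠ 0 := by
    intro z hz h
    have := hre z hz
    have : (p z + 1).re = (p z).re + 1 := by simp
    rw [h] at this; simp at this; linarith [hre z hz]
  have hgd : DifferentiableOn ℂ g (ball 0 1) :=
    ((hp.sub (differentiableOn_const 1)).div (hp.add (differentiableOn_const 1)) hne)
  have hg0 : g 0 = 0 := by simp [hg, h0]
  have hmaps : Set.MapsTo g (ball 0 1) (ball (g 0) 1) := by
    intro z hz
    rw [hg0, mem_ball_zero_iff]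
    have h1 : ‖p z - 1‖ < ‖p z + 1‖ := by
      have : Complex.normSq (p z - 1) < Complex.normSq (p z + 1) := by
        simp [Complex.normSq_apply, Complex.add_re, Complex.sub_re, Complex.add_im,
          Complex.sub_im]
        nlinarith [hre z hz]
      have := Real.sqrt_lt_sqrt (Complex.normSq_nonneg _) this
      simpa [Complex.norm_def] using this
    have h2 : 0 < ‖p z + 1‖ := (norm_pos_iff.mpr (hne z hz))
    show ‖(p z - 1) / (p z + 1)‖ < 1
    rw [norm_div, div_lt_one h2]; exact h1
  have hmem : (0:ℂ) ∈ ball (0:ℂ) 1 := by simp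
  have hpd : HasDerivAt p (deriv p 0) 0 :=
    (hp.differentiableAt (isOpen_ball.mem_nhds hmem)).hasDerivAt
  have hne0 : p 0 + 1 ≠ 0 := hne 0 hmem
  have hgder : HasDerivAt g ((deriv p 0 * (p 0 + 1) - (p 0 - 1) * deriv p 0) / (p 0 + 1) ^ 2) 0 :=
    (hpd.sub_const 1).div (hpd.add_const 1) hne0
  have hval : deriv g 0 = deriv p 0 / 2 := by
    rw [hgder.deriv, h0]; ring
  have := norm_deriv_le_div_of_mapsTo_ball hgd (hmaps.mono_right ball_subset_closedBall) one_pos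
  rw [hval] at this
  have : ‖deriv p 0‖ / 2 ≤ 1 := by
    simpa [norm_div] using this
  linarith

lemma koebe_deriv {z : ℂ} (hz : (1:ℂ) - z ≠ 0) :
    HasDerivAt (fun w : ℂ => w * (1 - w)⁻¹) (((1 - z) ^ 2)⁻¹) z := by
  have h1 : HasDerivAt (fun w : ℂ => 1 - w) (-1) z := by
    simpa using (hasDerivAt_id z).const_sub 1
  have h2 := h1.inv hz
  have h3 := (hasDerivAt_id z).mul h2
  refine h3.congr_deriv ?_
  simp only [id, Pi.inv_apply]
  field_simp
  ring

theorem F2_gamma1 :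
    (∀ f : ℂ → ℂ, AnalyticOn ℂ f (ball 0 1) → f 0 = 0 → deriv f 0 = 1 →
      (∀ z ∈ ball (0:ℂ) 1, 0 < ((1 - z^2) * deriv f z).re) →
      ‖(iteratedDeriv 2 f 0 / 2) / 2‖ ≤ 1/2) ∧
    ∃ f : ℂ → ℂ, AnalyticOn ℂ f (ball 0 1) ∧ f 0 = 0 ∧ deriv f 0 = 1 ∧
      (∀ z ∈ ball (0:ℂ) 1, 0 < ((1 - z^2) * deriv f z).re) ∧
      ‖(iteratedDeriv 2 f 0 / 2) / 2‖ = 1/2 := by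
  constructor
  · intro f hf hf0 hf1 hre
    have hfn : AnalyticOnNhd ℂ f (ball 0 1) :=
      (isOpen_ball.analyticOn_iff_analyticOnNhd).mp hf
    have hdn : AnalyticOnNhd ℂ (deriv f) (ball 0 1) := hfn.deriv
    set p : ℂ → ℂ := fun z => (1 - z ^ 2) * deriv f z with hp
    have hpd : DifferentiableOn ℂ p (ball 0 1) :=
      ((differentiable_const (1:ℂ)).sub (differentiable_pow 2)).differentiableOn.mul
        hdn.differentiableOn
    have hmem : (0:ℂ) ∈ ball (0:ℂ) 1 := by simp
    have hp0 : p 0 = 1 := by simp [hp, hf1]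
    have hd2 : HasDerivAt (deriv f) (deriv (deriv f) 0) 0 :=
      ((hdn 0 hmem).differentiableAt).hasDerivAt
    have hu : HasDerivAt (fun z : ℂ => 1 - z ^ 2) 0 0 := by
      simpa using (hasDerivAt_pow 2 (0:ℂ)).const_sub 1
    have hpder : HasDerivAt p (0 * deriv f 0 + (1 - 0 ^ 2) * deriv (deriv f) 0) 0 :=
      hu.mul hd2
    have hpder' : deriv p 0 = deriv (deriv f) 0 := by
      rw [hpder.deriv]; ring
    have hcara := cara hpd hp0 hre
    rw [hpder'] at hcara
    have hit : iteratedDeriv 2 f 0 = deriv (deriv f) 0 := by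
      simp [iteratedDeriv_succ, iteratedDeriv_one]
    rw [hit]
    rw [norm_div, norm_div]
    simp only [Complex.norm_two]
    rw [div_div]
    rw [div_le_div_iff₀ (by norm_num) (by norm_num)]
    linarith
  · have hne : ∀ z ∈ ball (0:ℂ) 1, (1:ℂ) - z ≠ 0 := by
      intro z hz h
      rw [mem_ball_zero_iff] at hz
      have hz1 : z = 1 := by linear_combination -h
      rw [hz1] at hz; simp at hz
    set f : ℂ → ℂ := fun w => w * (1 - w)⁻¹ with hfdef
    have hmem : (0:ℂ) ∈ ball (0:ℂ) 1 := by simp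
    have hdf : ∀ z ∈ ball (0:ℂ) 1, deriv f z = ((1 - z) ^ 2)⁻¹ :=
      fun z hz => (koebe_deriv (hne z hz)).deriv
    refine ⟨f, ?_, by simp [hfdef], ?_, ?_, ?_⟩
    · rw [isOpen_ball.analyticOn_iff_analyticOnNhd]
      exact analyticOnNhd_id.mul ((analyticOnNhd_const.sub analyticOnNhd_id).inv hne)
    · rw [hdf 0 hmem]; norm_num
    · intro z hz
      rw [hdf z hz]
      have h1 : (1 - z ^ 2) * ((1 - z) ^ 2)⁻¹ = (1 + z) / (1 - z) := by
        have := hne z hz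
        field_simp
        ring
      rw [h1, Complex.div_re]
      have hns : 0 < Complex.normSq (1 - z) := Complex.normSq_pos.mpr (hne z hz)
      have habs : ‖z‖ < 1 := by
        rw [mem_ball_zero_iff] at hz
        simpa using hz
      have hlt : z.re ^ 2 + z.im ^ 2 < 1 := by
        have h := Complex.sq_norm z
        rw [Complex.normSq_apply] at h
        nlinarith [norm_nonneg z]
      have h2 : (1 + z).re * (1 - z).re + (1 + z).im * (1 - z).im
          = 1 - (z.re ^ 2 + z.im ^ 2) := by
        simp [Complex.add_re, Complex.sub_re, Complex.add_im, Complex.sub_im]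
        ring
      rw [← add_div, h2]
      exact div_pos (by linarith) hns
    · have heq : deriv f =ᶠ[nhds (0:ℂ)] fun z => ((1 - z) ^ 2)⁻¹ :=
        Filter.eventuallyEq_of_mem (isOpen_ball.mem_nhds hmem) hdf
      have h1 : HasDerivAt (fun w : ℂ => 1 - w) (-1) 0 := by
        simpa using (hasDerivAt_id (0:ℂ)).const_sub 1
      have h2 := (h1.pow 2).inv (by norm_num : ((1:ℂ) - 0) ^ 2 ≠ 0)
      have h3 : deriv (fun z : ℂ => ((1 - z) ^ 2)⁻¹) 0 = 2 := by
        rw [show (fun z : ℂ => ((1 - z) ^ 2)⁻¹) = ((fun w : ℂ => 1 - w) ^ 2)⁻¹ from rfl, h2.deriv]; norm_num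
      have hit : iteratedDeriv 2 f 0 = 2 := by
        rw [iteratedDeriv_succ, iteratedDeriv_one, heq.deriv_eq, h3]
      rw [hit]; norm_num
end

section
/- Let f be analytic on the unit disk with f(0)=0, f'(0)=1, Re[(1-z+z^2)f'(z)] > 0 on the disk, with Taylor coefficients a_n. Then γ_2 = (a_3 - a_2^2/2)/2 satisfies |γ_2| ≤ 2/5, and this bound is sharp. -/
open Metric Complex

lemma key_ineq (x y : ℝ) (h : x^2+y^2 ≤ 1) :
    (x^2-y^2+x-3/4)^2 + (2*x*y+y)^2 ≤ (4/5+4*(x^2+y^2))^2 := by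
  nlinarith [sq_nonneg (x+1/10), sq_nonneg y, sq_nonneg (x*y+y), sq_nonneg (x^2+y^2), sq_nonneg (x^2+y^2-1/100), mul_nonneg (sub_nonneg.2 h) (sq_nonneg (x+1/10)), mul_nonneg (sub_nonneg.2 h) (sq_nonneg y), sq_nonneg (x^2+y^2+x/10), sq_nonneg (x+y), sq_nonneg (x-y)]


lemma normSq_mobius (u v : ℂ) :
    normSq (1 - (starRingEnd ℂ) u * v) - normSq (v - u) = (1 - normSq u) * (1 - normSq v) := by
  simp [Complex.normSq_apply, Complex.mul_re, Complex.mul_im]; ring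

lemma schwarz_pick_coeff {φ : ℂ → ℂ} (hd : DifferentiableOn ℂ φ (ball 0 1))
    (hbd : ∀ z ∈ ball (0:ℂ) 1, ‖φ z‖ ≤ 1) {b : ℂ} (hb0 : HasDerivAt φ b 0) :
    ‖b‖ ≤ 1 - normSq (φ 0) := by
  set a := φ 0 with ha
  have h01 : (0:ℂ) ∈ ball (0:ℂ) 1 := by simp
  have haa : ‖a‖ ≤ 1 := hbd 0 h01
  have hnsa : normSq a ≤ 1 := by nlinarith [Complex.sq_norm a, norm_nonneg a]
  have key : ∀ s : ℝ, 0 < s → s < 1 → s * ‖b‖ + s^2 * normSq a ≤ 1 := by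
    intro s hs0 hs1
    set c : ℂ := (starRingEnd ℂ) ((s:ℂ) * a) with hc
    have hnsφ : ∀ z ∈ ball (0:ℂ) 1, normSq (φ z) ≤ 1 := by
      intro z hz
      nlinarith [Complex.sq_norm (φ z), norm_nonneg (φ z), hbd z hz]
    have hden : ∀ z ∈ ball (0:ℂ) 1, (1 : ℂ) - c * ((s:ℂ) * φ z) ≠ 0 := by
      intro z hz h
      have h2 : c * ((s:ℂ) * φ z) = 1 := by linear_combination -h
      have h3 : normSq (c * ((s:ℂ) * φ z)) = 1 := by rw [h2, Complex.normSq_one]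
      rw [hc, map_mul, Complex.normSq_conj, Complex.normSq_mul, Complex.normSq_mul,
        Complex.normSq_ofReal] at h3
      have h4 : s * s * normSq a ≤ s * s := by nlinarith [Complex.normSq_nonneg a]
      have h5 : s * s * normSq (φ z) ≤ s * s := by
        nlinarith [Complex.normSq_nonneg (φ z), hnsφ z hz]
      have h6 := mul_le_mul h4 h5 (mul_nonneg (mul_nonneg hs0.le hs0.le) (Complex.normSq_nonneg _)) (mul_nonneg hs0.le hs0.le)
      have hss : s * s < 1 := by nlinarith
      have h7 : (s*s)*(s*s) < 1 := by nlinarith [mul_pos hs0 hs0]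
      nlinarith [h3, h6, h7]
    set g : ℂ → ℂ := fun z => ((s:ℂ) * φ z - (s:ℂ) * a) / (1 - c * ((s:ℂ) * φ z)) with hg
    have hgd : DifferentiableOn ℂ g (ball 0 1) := by
      apply DifferentiableOn.div
      · exact ((hd.const_smul (s:ℂ)).sub_const ((s:ℂ)*a)).congr
          (fun z hz => by simp [smul_eq_mul])
      · exact DifferentiableOn.const_sub (((hd.const_smul (s:ℂ)).const_smul c).congr
          (fun z hz => by simp [smul_eq_mul, mul_assoc])) 1
      · exact hden
    have hg0 : g 0 = 0 := by simp [hg, ha]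
    have hmaps : Set.MapsTo g (ball 0 1) (ball (g 0) 1) := by
      rw [hg0]
      intro z hz
      rw [mem_ball_zero_iff, hg]
      have hpos0 : 0 < ‖1 - c * ((s:ℂ) * φ z)‖ := norm_pos_iff.mpr (hden z hz)
      rw [norm_div, div_lt_one hpos0]
      · have hid := normSq_mobius ((s:ℂ)*a) ((s:ℂ)*φ z)
        have hnu : normSq ((s:ℂ)*a) ≤ s^2 := by
          rw [normSq_mul, Complex.normSq_ofReal]
          nlinarith [Complex.normSq_nonneg a]
        have hnv : normSq ((s:ℂ)*φ z) ≤ s^2 := by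
          rw [normSq_mul, Complex.normSq_ofReal]
          nlinarith [Complex.normSq_nonneg (φ z), hnsφ z hz]
        have e1 : 0 < 1 - normSq ((s:ℂ)*a) := by nlinarith
        have e2 : 0 < 1 - normSq ((s:ℂ)*φ z) := by nlinarith
        have hpos : 0 < normSq (1 - c * ((s:ℂ)*φ z)) - normSq ((s:ℂ)*φ z - (s:ℂ)*a) := by
          rw [hc, hid]; exact mul_pos e1 e2
        rw [Complex.norm_def, Complex.norm_def]
        exact Real.sqrt_lt_sqrt (normSq_nonneg _) (by linarith)
    have hsch := Complex.norm_deriv_le_div_of_mapsTo_ball hgd (hmaps.mono_right ball_subset_closedBall) one_pos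
    have hnum : HasDerivAt (fun z => (s:ℂ) * φ z - (s:ℂ) * a) ((s:ℂ) * b) 0 :=
      (hb0.const_mul (s:ℂ)).sub_const _
    have hdend : HasDerivAt (fun z => (1:ℂ) - c * ((s:ℂ) * φ z)) (-(c * ((s:ℂ)*b))) 0 := by
      have := ((hb0.const_mul (s:ℂ)).const_mul c).const_sub 1
      convert this using 2
    have hden0 : (1:ℂ) - c * ((s:ℂ) * a) ≠ 0 := by
      have := hden 0 h01; rwa [← ha] at this
    have hgder : HasDerivAt g ((s:ℂ) * b / (1 - c * ((s:ℂ) * a))) 0 := by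
      have hq := hnum.div hdend (hden 0 h01)
      rw [← ha] at hq
      have hq : HasDerivAt g _ 0 := hq
      convert hq using 1
      rw [sub_self, zero_mul, sub_zero, pow_two, mul_div_mul_right _ _ hden0]
    have hmc : (starRingEnd ℂ) a * a = ((normSq a : ℝ) : ℂ) := by
      rw [mul_comm, Complex.mul_conj]
    have hval : (1:ℂ) - c * ((s:ℂ) * a) = ((1 - s^2 * normSq a : ℝ) : ℂ) := by
      rw [hc, map_mul, Complex.conj_ofReal]
      push_cast
      linear_combination (-(s:ℂ)^2) * hmc
    have habs0 : (0:ℝ) < 1 - s^2 * normSq a := by nlinarith [Complex.normSq_nonneg a]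
    rw [hgder.deriv, hval, norm_div, norm_mul, Complex.norm_real, Complex.norm_real, Real.norm_eq_abs, Real.norm_eq_abs,
      abs_of_pos hs0, abs_of_pos habs0] at hsch
    have hsch' : s * ‖b‖ ≤ 1 - s^2 * normSq a := by
      rw [div_le_div_iff₀ habs0 one_pos] at hsch
      linarith
    linarith
  have hlim : Filter.Tendsto (fun s : ℝ => s * ‖b‖ + s^2 * normSq a)
      (nhdsWithin 1 (Set.Iio 1)) (nhds (‖b‖ + normSq a)) := by
    have hcont : Continuous (fun s : ℝ => s * ‖b‖ + s^2 * normSq a) := by continuity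
    have := hcont.tendsto 1
    simp only [one_mul, one_pow] at this
    exact this.mono_left nhdsWithin_le_nhds
  have hev : ∀ᶠ s in nhdsWithin (1:ℝ) (Set.Iio 1),
      s * ‖b‖ + s^2 * normSq a ≤ 1 := by
    filter_upwards [Ioo_mem_nhdsLT_of_mem (Set.mem_Ioc.mpr ⟨zero_lt_one, le_refl (1:ℝ)⟩)]
      with s hs
    exact key s hs.1 hs.2
  have := le_of_tendsto hlim hev
  linarith



theorem F3_bound (f : ℂ → ℂ) (hf : AnalyticOn ℂ f (ball 0 1)) (hf0 : f 0 = 0)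
    (hf1 : deriv f 0 = 1)
    (hre : ∀ z ∈ ball (0:ℂ) 1, 0 < ((1 - z + z^2) * deriv f z).re) :
    ‖(iteratedDeriv 3 f 0 / 6 - (iteratedDeriv 2 f 0 / 2) ^ 2 / 2) / 2‖ ≤ 2/5 := by
  have hO : IsOpen (ball (0:ℂ) 1) := isOpen_ball
  have h01 : (0:ℂ) ∈ ball (0:ℂ) 1 := by simp
  have hfN : AnalyticOnNhd ℂ f (ball 0 1) := hO.analyticOn_iff_analyticOnNhd.mp hf
  set f1 : ℂ → ℂ := deriv f with hf1d
  set f2 : ℂ → ℂ := deriv f1 with hf2d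
  set f3 : ℂ → ℂ := deriv f2 with hf3d
  have hf1N : AnalyticOnNhd ℂ f1 (ball 0 1) := hfN.deriv
  have hf2N : AnalyticOnNhd ℂ f2 (ball 0 1) := hf1N.deriv
  have hf3N : AnalyticOnNhd ℂ f3 (ball 0 1) := hf2N.deriv
  set p : ℂ → ℂ := fun z => (1 - z + z^2) * f1 z with hp
  have hp0 : p 0 = 1 := by simp [hp, ← hf1d, hf1]
  have hpre : ∀ z ∈ ball (0:ℂ) 1, 0 < (p z).re := hre
  have hne : ∀ z ∈ ball (0:ℂ) 1, p z + 1 ≠ 0 := by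
    intro z hz h
    have h2 : p z = -1 := by linear_combination h
    have := hpre z hz
    rw [h2] at this
    norm_num at this
  set w : ℂ → ℂ := fun z => (p z - 1) / (p z + 1) with hw
  have hw0 : w 0 = 0 := by simp [hw, hp0]
  set p' : ℂ → ℂ := fun z => (2*z - 1) * f1 z + (1 - z + z^2) * f2 z with hp'
  set p'' : ℂ → ℂ := fun z => 2 * f1 z + 2*(2*z-1) * f2 z + (1 - z + z^2) * f3 z with hp''
  have hpd : ∀ z ∈ ball (0:ℂ) 1, HasDerivAt p (p' z) z := by
    intro z hz
    have hq : HasDerivAt (fun z : ℂ => 1 - z + z^2) (2*z - 1) z := by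
      have h1 : HasDerivAt (fun z : ℂ => 1 - z + z^2) (0 - 1 + 2*z^1) z :=
        ((hasDerivAt_const z 1).sub (hasDerivAt_id z)).add (hasDerivAt_pow 2 z)
      convert h1 using 1
      ring
    exact hq.mul (hf1N z hz).differentiableAt.hasDerivAt
  have hp'd : HasDerivAt p' (p'' 0) 0 := by
    have hq : HasDerivAt (fun z : ℂ => 2*z - 1) 2 0 := by
      simpa using ((hasDerivAt_id (0:ℂ)).const_mul 2).sub_const 1
    have hq2 : HasDerivAt (fun z : ℂ => 1 - z + z^2) (2*0 - 1) 0 := by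
      have h1 : HasDerivAt (fun z : ℂ => 1 - z + z^2) (0 - 1 + 2*0^1) 0 :=
        ((hasDerivAt_const 0 1).sub (hasDerivAt_id 0)).add (hasDerivAt_pow 2 0)
      convert h1 using 1
      ring
    have h2 : HasDerivAt (fun z : ℂ => (2*z - 1) * f1 z)
        (2 * f1 0 + (2*0-1) * f2 0) 0 :=
      hq.mul (hf1N 0 h01).differentiableAt.hasDerivAt
    have h3 : HasDerivAt (fun z : ℂ => (1 - z + z^2) * f2 z)
        ((2*0-1) * f2 0 + (1 - 0 + 0^2) * f3 0) 0 :=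
      hq2.mul (hf2N 0 h01).differentiableAt.hasDerivAt
    have h4 := h2.add h3
    have h4 : HasDerivAt p' _ 0 := h4
    convert h4 using 1
    simp [hp'']
    ring
  set W1 : ℂ → ℂ := fun z => 2 * p' z / (p z + 1)^2 with hW1
  have hwd : ∀ z ∈ ball (0:ℂ) 1, HasDerivAt w (W1 z) z := by
    intro z hz
    have hq := ((hpd z hz).sub_const 1).div ((hpd z hz).add_const 1) (hne z hz)
    have hq : HasDerivAt w _ z := hq
    convert hq using 1
    rw [hW1]
    congr 1
    ring
  have hwdOn : DifferentiableOn ℂ w (ball 0 1) :=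
    fun z hz => ((hwd z hz).differentiableAt).differentiableWithinAt
  -- second derivative of w at 0
  have hW1d : HasDerivAt W1 (p'' 0 / 2 - (p' 0)^2 / 2) 0 := by
    have hnum : HasDerivAt (fun z => 2 * p' z) (2 * p'' 0) 0 := hp'd.const_mul 2
    have hden : HasDerivAt (fun z => (p z + 1)^2) (2 * (p 0 + 1)^1 * p' 0) 0 :=
      ((hpd 0 h01).add_const 1).pow 2
    have hne2 : (p 0 + 1)^2 ≠ 0 := by rw [hp0]; norm_num
    have hq := hnum.div hden hne2
    have hq : HasDerivAt W1 _ 0 := hq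
    convert hq using 1
    rw [hp0]
    norm_num
    ring
  have hderivw : deriv w =ᶠ[nhds (0:ℂ)] W1 := by
    filter_upwards [hO.mem_nhds h01] with z hz
    exact (hwd z hz).deriv
  have hit2w : iteratedDeriv 2 w 0 = p'' 0 / 2 - (p' 0)^2 / 2 := by
    rw [iteratedDeriv_succ, iteratedDeriv_one]
    rw [hderivw.deriv_eq]
    exact hW1d.deriv
  have hderw0 : deriv w 0 = p' 0 / 2 := by
    rw [(hwd 0 h01).deriv]
    show 2 * p' 0 / (p 0 + 1)^2 = p' 0 / 2
    rw [hp0]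
    ring
  -- power series of w
  have hA : AnalyticAt ℂ w 0 := hwdOn.analyticAt (hO.mem_nhds h01)
  obtain ⟨P, hP⟩ := hA
  obtain ⟨r, hPr⟩ := id hP
  have hc2 : (2:ℂ) * P.coeff 2 = iteratedDeriv 2 w 0 := by
    have h := hPr.factorial_smul (1:ℂ) 2
    rw [iteratedDeriv_eq_iteratedFDeriv, ← h]
    show (2:ℂ) * P.coeff 2 = ((2:ℕ).factorial : ℕ) • P.coeff 2
    simp [Nat.factorial]
  -- Schwarz bound for w coefficients
  have hmapsw : Set.MapsTo w (ball 0 1) (ball (w 0) 1) := by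
    rw [hw0]
    intro z hz
    rw [mem_ball_zero_iff, hw]
    have hd0 := hne z hz
    have hdiff : normSq (p z + 1) - normSq (p z - 1) = 4 * (p z).re := by
      simp [Complex.normSq_apply, Complex.add_re, Complex.add_im, Complex.sub_re,
        Complex.sub_im]
      ring
    have hlt : normSq (p z - 1) < normSq (p z + 1) := by
      have := hpre z hz
      linarith
    have hpos : 0 < ‖p z + 1‖ := norm_pos_iff.mpr hd0
    simp only
    rw [norm_div, div_lt_one hpos, Complex.norm_def, Complex.norm_def]
    exact Real.sqrt_lt_sqrt (normSq_nonneg _) hlt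
  set φ : ℂ → ℂ := dslope w 0 with hφ
  have hφser : HasFPowerSeriesAt φ P.fslope 0 := hP.has_fpower_series_dslope_fslope
  have hφb : HasDerivAt φ (P.coeff 2) 0 := by
    have := hφser.hasDerivAt
    have h2 : (P.fslope 1 fun _ => 1) = P.coeff 2 := by
      rw [show (P.fslope 1 fun _ => 1) = P.fslope.coeff 1 from rfl,
        FormalMultilinearSeries.coeff_fslope]
    rwa [h2] at this
  have hφ0 : φ 0 = deriv w 0 := dslope_same w 0
  have hφd : DifferentiableOn ℂ φ (ball 0 1) := by
    intro z hz
    rcases eq_or_ne z 0 with rfl | hzne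
    · exact hφser.analyticAt.differentiableAt.differentiableWithinAt
    · exact (differentiableWithinAt_dslope_of_ne hzne).mpr (hwdOn z hz)
  have hφbd : ∀ z ∈ ball (0:ℂ) 1, ‖φ z‖ ≤ 1 := by
    intro z hz
    have := Complex.norm_dslope_le_div_of_mapsTo_ball hwdOn (hmapsw.mono_right ball_subset_closedBall) hz
    simpa using this
  have hB := schwarz_pick_coeff hφd hφbd hφb
  rw [hφ0] at hB
  have hA1 : ‖deriv w 0‖ ≤ 1 := by
    have := hφbd 0 h01
    rwa [hφ0] at this
  -- identify values
  set A : ℂ := deriv w 0 with hAdef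
  set B : ℂ := P.coeff 2 with hBdef
  have hBval : B = (p'' 0 / 2 - (p' 0)^2 / 2) / 2 := by
    have h2 := hc2.trans hit2w
    linear_combination h2 / 2
  set I2 : ℂ := iteratedDeriv 2 f 0 with hI2
  set I3 : ℂ := iteratedDeriv 3 f 0 with hI3
  have hf20 : f2 0 = I2 := by
    rw [hI2, iteratedDeriv_succ, iteratedDeriv_one, hf2d, hf1d]
  have hf30 : f3 0 = I3 := by
    rw [hI3, iteratedDeriv_succ, iteratedDeriv_succ, iteratedDeriv_one, hf3d, hf2d, hf1d]
  have hf10 : f1 0 = 1 := hf1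
  have hp'0 : p' 0 = I2 - 1 := by
    show (2*(0:ℂ) - 1) * f1 0 + (1 - 0 + 0^2) * f2 0 = I2 - 1
    rw [hf10, hf20]; ring
  have hp''0 : p'' 0 = 2 - 2*I2 + I3 := by
    show 2 * f1 0 + 2*(2*(0:ℂ)-1) * f2 0 + (1 - 0 + 0^2) * f3 0 = 2 - 2*I2 + I3
    rw [hf10, hf20, hf30]; ring
  have hAval : A = (I2 - 1)/2 := by rw [hderw0, hp'0]
  have hBval2 : B = (2 - 2*I2 + I3 - (I2-1)^2)/4 := by
    rw [hBval, hp''0, hp'0]; ring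
  -- main identity
  have hident : (I3 / 6 - (I2 / 2) ^ 2 / 2) / 2 = B/3 + (A^2 + A - 3/4)/12 := by
    rw [hAval, hBval2]; ring
  rw [hident]
  -- final estimate
  have hnsA : normSq A ≤ 1 := by
    nlinarith [Complex.sq_norm A, norm_nonneg A, hA1]
  have habsB : ‖B‖ ≤ 1 - normSq A := hB
  have hkey : ‖A^2 + A - 3/4‖ ≤ 4/5 + 4 * normSq A := by
    have hsq : normSq (A^2 + A - 3/4) =
        (A.re^2 - A.im^2 + A.re - 3/4)^2 + (2*A.re*A.im + A.im)^2 := by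
      simp [Complex.normSq_apply, pow_two, Complex.mul_re, Complex.mul_im, Complex.add_re,
        Complex.add_im, Complex.sub_re, Complex.sub_im]
      norm_num
      ring
    have hxy : A.re^2 + A.im^2 ≤ 1 := by
      have := hnsA
      rwa [Complex.normSq_apply, ← pow_two, ← pow_two] at this
    have hk := key_ineq A.re A.im hxy
    have h2 : (‖A^2 + A - 3/4‖)^2 ≤ (4/5 + 4 * normSq A)^2 := by
      rw [Complex.sq_norm, hsq]
      rw [Complex.normSq_apply, ← pow_two, ← pow_two]
      convert hk using 2
    nlinarith [norm_nonneg (A^2 + A - 3/4), Complex.normSq_nonneg A]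
  calc ‖B/3 + (A^2 + A - 3/4)/12‖
      ≤ ‖B/3‖ + ‖(A^2 + A - 3/4)/12‖ := norm_add_le _ _
    _ = ‖B‖ / 3 + ‖A^2 + A - 3/4‖ / 12 := by
        rw [norm_div, norm_div]
        norm_num
    _ ≤ (1 - normSq A)/3 + (4/5 + 4*normSq A)/12 := by linarith
    _ = 2/5 := by ring


noncomputable def fext : ℂ → ℂ :=
  fun z => (5/6) * (Complex.log (z^2 + z/5 + 1) - Complex.log (z^2 - z + 1))

lemma sq_lt (z : ℂ) (h : ‖z‖ < 1) : z.re^2 + z.im^2 < 1 := by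
  have h2 : ‖z‖ ^ 2 < 1 := by nlinarith [norm_nonneg z]
  rwa [Complex.sq_norm, Complex.normSq_apply, ← pow_two, ← pow_two] at h2

lemma re_q1 (z : ℂ) : (z^2 - z + 1).re = z.re^2 - z.im^2 - z.re + 1 := by
  simp [pow_two, Complex.mul_re]
lemma im_q1 (z : ℂ) : (z^2 - z + 1).im = 2*z.re*z.im - z.im := by
  simp [pow_two, Complex.mul_im]; ring
lemma re_q2 (z : ℂ) : (z^2 + z/5 + 1).re = z.re^2 - z.im^2 + z.re/5 + 1 := by
  simp [pow_two, Complex.mul_re, Complex.div_re, Complex.normSq_apply]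
lemma im_q2 (z : ℂ) : (z^2 + z/5 + 1).im = 2*z.re*z.im + z.im/5 := by
  simp [pow_two, Complex.mul_im, Complex.div_im, Complex.normSq_apply]
  ring

lemma mem_slit1 (z : ℂ) (h : ‖z‖ < 1) : (z^2 - z + 1) ∈ slitPlane := by
  have hxy := sq_lt z h
  rw [Complex.mem_slitPlane_iff, re_q1, im_q1]
  rcases eq_or_ne (2*z.re*z.im - z.im) 0 with h0 | h0
  · left
    have : z.im * (2*z.re - 1) = 0 := by linarith [h0]; 
    rcases mul_eq_zero.mp this with h1 | h1
    · nlinarith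
    · have : z.re = 1/2 := by linarith
      nlinarith
  · right; exact h0

lemma mem_slit2 (z : ℂ) (h : ‖z‖ < 1) : (z^2 + z/5 + 1) ∈ slitPlane := by
  have hxy := sq_lt z h
  rw [Complex.mem_slitPlane_iff, re_q2, im_q2]
  rcases eq_or_ne (2*z.re*z.im + z.im/5) 0 with h0 | h0
  · left
    have : z.im * (2*z.re + 1/5) = 0 := by linarith [h0]
    rcases mul_eq_zero.mp this with h1 | h1
    · nlinarith
    · have : z.re = -1/10 := by linarith
      nlinarith
  · right; exact h0

lemma ne1 (z : ℂ) (h : ‖z‖ < 1) : z^2 - z + 1 ≠ 0 :=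
  Complex.slitPlane_ne_zero (mem_slit1 z h)
lemma ne2 (z : ℂ) (h : ‖z‖ < 1) : z^2 + z/5 + 1 ≠ 0 :=
  Complex.slitPlane_ne_zero (mem_slit2 z h)

noncomputable def gext : ℂ → ℂ :=
  fun z => (1 - z^2) / ((z^2 - z + 1) * (z^2 + z/5 + 1))

lemma hq1d (z : ℂ) : HasDerivAt (fun z : ℂ => z^2 - z + 1) (2*z - 1) z := by
  have h1 : HasDerivAt (fun z : ℂ => z^2 - z + 1) (2*z^1 - 1 + 0) z :=
    ((hasDerivAt_pow 2 z).sub (hasDerivAt_id z)).add (hasDerivAt_const z 1)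
  convert h1 using 1; ring

lemma hq2d (z : ℂ) : HasDerivAt (fun z : ℂ => z^2 + z/5 + 1) (2*z + 1/5) z := by
  have h1 : HasDerivAt (fun z : ℂ => z^2 + z/5 + 1) (2*z^1 + 1/5 + 0) z :=
    ((hasDerivAt_pow 2 z).add ((hasDerivAt_id z).div_const 5)).add (hasDerivAt_const z 1)
  convert h1 using 1; ring

lemma fext_hasDeriv (z : ℂ) (h : ‖z‖ < 1) : HasDerivAt fext (gext z) z := by
  have hl1 : HasDerivAt (fun z : ℂ => Complex.log (z^2 + z/5 + 1))
      ((2*z + 1/5)/(z^2 + z/5 + 1)) z := (hq2d z).clog (mem_slit2 z h)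
  have hl2 : HasDerivAt (fun z : ℂ => Complex.log (z^2 - z + 1))
      ((2*z - 1)/(z^2 - z + 1)) z := (hq1d z).clog (mem_slit1 z h)
  have h3 := (hl1.sub hl2).const_mul ((5:ℂ)/6)
  have h3 : HasDerivAt fext _ z := h3
  convert h3 using 1
  show gext z = (5:ℂ)/6 * ((2*z + 1/5)/(z^2 + z/5 + 1) - (2*z - 1)/(z^2 - z + 1))
  rw [gext, div_sub_div _ _ (ne2 z h) (ne1 z h), mul_div_assoc']
  rw [show (5:ℂ)/6 * ((2*z + 1/5)*(z^2 - z + 1) - (z^2 + z/5 + 1)*(2*z - 1)) = 1 - z^2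
    from by ring]
  rw [show (z^2 + z/5 + 1)*(z^2 - z + 1) = (z^2 - z + 1)*(z^2 + z/5 + 1) from by ring]

lemma fext_analytic : AnalyticOnNhd ℂ fext (ball 0 1) := by
  intro z hz
  rw [mem_ball_zero_iff] at hz
  have hid : AnalyticAt ℂ (fun z : ℂ => z) z := analyticAt_id
  have hq2 : AnalyticAt ℂ (fun z : ℂ => z^2 + z/5 + 1) z :=
    ((hid.pow 2).add (hid.div analyticAt_const (by norm_num))).add analyticAt_const
  have hq1 : AnalyticAt ℂ (fun z : ℂ => z^2 - z + 1) z :=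
    ((hid.pow 2).sub hid).add analyticAt_const
  have h1 := AnalyticAt.comp (g := Complex.log) (f := fun z : ℂ => z^2 + z/5 + 1) (x := z)
    (analyticAt_clog (mem_slit2 z hz)) hq2
  have h2 := AnalyticAt.comp (g := Complex.log) (f := fun z : ℂ => z^2 - z + 1) (x := z)
    (analyticAt_clog (mem_slit1 z hz)) hq1
  exact analyticAt_const.mul (h1.sub h2)

lemma fext0 : fext 0 = 0 := by
  simp [fext]

lemma ball_abs {z : ℂ} (hz : z ∈ ball (0:ℂ) 1) : ‖z‖ < 1 := by
  rwa [mem_ball_zero_iff] at hz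

lemma deriv_fext_eq {z : ℂ} (hz : z ∈ ball (0:ℂ) 1) : deriv fext z = gext z :=
  (fext_hasDeriv z (ball_abs hz)).deriv

lemma deriv_fext0 : deriv fext 0 = 1 := by
  rw [deriv_fext_eq (by simp), gext]
  norm_num

lemma re_pos_fext {z : ℂ} (hz : z ∈ ball (0:ℂ) 1) :
    0 < ((1 - z + z^2) * deriv fext z).re := by
  have h := ball_abs hz
  rw [deriv_fext_eq hz]
  have he : (1 - z + z^2) * gext z = (1 - z^2)/(z^2 + z/5 + 1) := by
    rw [gext, mul_div_assoc']
    rw [div_eq_div_iff (mul_ne_zero (ne1 z h) (ne2 z h)) (ne2 z h)]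
    ring
  rw [he, Complex.div_re, ← add_div]
  apply div_pos
  · have hre1 : (1 - z^2).re = 1 - z.re^2 + z.im^2 := by
      simp [pow_two, Complex.mul_re]; ring
    have him1 : (1 - z^2).im = -(2*z.re*z.im) := by
      simp [pow_two, Complex.mul_im]; ring
    rw [hre1, him1, re_q2, im_q2]
    have hxy := sq_lt z h
    have hfac : (1 - z.re^2 + z.im^2) * (z.re^2 - z.im^2 + z.re/5 + 1) +
        -(2*z.re*z.im) * (2*z.re*z.im + z.im/5)
        = (1 - (z.re^2 + z.im^2)) * (1 + (z.re^2 + z.im^2) + z.re/5) := by ring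
    rw [hfac]
    apply mul_pos (by linarith)
    nlinarith [sq_nonneg z.im, sq_nonneg (z.re + 1)]
  · exact Complex.normSq_pos.mpr (ne2 z h)

noncomputable def Dex : ℂ → ℂ := fun z => (z^2 - z + 1) * (z^2 + z/5 + 1)
noncomputable def Ddex : ℂ → ℂ :=
  fun z => (2*z - 1) * (z^2 + z/5 + 1) + (z^2 - z + 1) * (2*z + 1/5)
noncomputable def g1ex : ℂ → ℂ :=
  fun z => ((-2*z) * Dex z - (1 - z^2) * Ddex z) / (Dex z)^2

lemma hDexd (z : ℂ) : HasDerivAt Dex (Ddex z) z := (hq1d z).mul (hq2d z)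

lemma hNexd (z : ℂ) : HasDerivAt (fun z : ℂ => 1 - z^2) (-2*z) z := by
  have h1 := (hasDerivAt_const z (1:ℂ)).sub (hasDerivAt_pow 2 z)
  have h1 : HasDerivAt (fun z : ℂ => 1 - z^2) _ z := h1
  convert h1 using 1
  ring

lemma hDexne (z : ℂ) (h : ‖z‖ < 1) : Dex z ≠ 0 :=
  mul_ne_zero (ne1 z h) (ne2 z h)

lemma gext_hasDeriv (z : ℂ) (h : ‖z‖ < 1) : HasDerivAt gext (g1ex z) z :=
  (hNexd z).div (hDexd z) (hDexne z h)

lemma iter2_fext : iteratedDeriv 2 fext 0 = 4/5 := by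
  rw [iteratedDeriv_succ, iteratedDeriv_one]
  have hev : deriv fext =ᶠ[nhds (0:ℂ)] gext := by
    filter_upwards [isOpen_ball.mem_nhds (by simp : (0:ℂ) ∈ ball (0:ℂ) 1)] with z hz
    exact deriv_fext_eq hz
  rw [hev.deriv_eq, (gext_hasDeriv 0 (by norm_num)).deriv]
  rw [g1ex, Dex, Ddex]
  norm_num

lemma h2z1 : HasDerivAt (fun z : ℂ => 2*z - 1) 2 0 := by
  simpa using ((hasDerivAt_id (0:ℂ)).const_mul 2).sub_const 1

lemma h2z15 : HasDerivAt (fun z : ℂ => 2*z + 1/5) 2 0 := by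
  simpa using ((hasDerivAt_id (0:ℂ)).const_mul 2).add_const (1/5)

lemma hm2z : HasDerivAt (fun z : ℂ => -2*z) (-2) 0 := by
  simpa using (hasDerivAt_id (0:ℂ)).const_mul (-2)

lemma iter3_fext : iteratedDeriv 3 fext 0 = -108/25 := by
  rw [iteratedDeriv_succ, iteratedDeriv_succ, iteratedDeriv_one]
  have hev : deriv fext =ᶠ[nhds (0:ℂ)] gext := by
    filter_upwards [isOpen_ball.mem_nhds (by simp : (0:ℂ) ∈ ball (0:ℂ) 1)] with z hz
    exact deriv_fext_eq hz
  have hev2 : deriv (deriv fext) =ᶠ[nhds (0:ℂ)] g1ex := by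
    filter_upwards [isOpen_ball.mem_nhds (by simp : (0:ℂ) ∈ ball (0:ℂ) 1)] with z hz
    have hevz : deriv fext =ᶠ[nhds z] gext := by
      filter_upwards [isOpen_ball.mem_nhds hz] with u hu
      exact deriv_fext_eq hu
    rw [hevz.deriv_eq, (gext_hasDeriv z (ball_abs hz)).deriv]
  rw [hev2.deriv_eq]
  -- derivative of g1ex at 0 via quotient rule
  have hDdd : HasDerivAt Ddex
      (2 * ((0:ℂ)^2 + 0/5 + 1) + (2*0 - 1) * (2*0 + 1/5)
        + ((2*(0:ℂ) - 1) * (2*0 + 1/5) + ((0:ℂ)^2 - 0 + 1) * 2)) 0 := by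
    exact (h2z1.mul (hq2d 0)).add ((hq1d 0).mul h2z15)
  have hNum : HasDerivAt (fun z : ℂ => (-2*z) * Dex z - (1 - z^2) * Ddex z)
      ((-2) * Dex 0 + (-2*0) * Ddex 0
        - ((-2*(0:ℂ)) * Ddex 0 + (1 - (0:ℂ)^2) * (2 * ((0:ℂ)^2 + 0/5 + 1)
          + (2*0 - 1) * (2*0 + 1/5)
          + ((2*(0:ℂ) - 1) * (2*0 + 1/5) + ((0:ℂ)^2 - 0 + 1) * 2)))) 0 :=
    (hm2z.mul (hDexd 0)).sub ((hNexd 0).mul hDdd)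
  have hDen : HasDerivAt (fun z : ℂ => (Dex z)^2) (2 * (Dex 0)^1 * Ddex 0) 0 :=
    (hDexd 0).pow 2
  have hne0 : ((Dex 0)^2 : ℂ) ≠ 0 := by
    rw [Dex]; norm_num
  have hq := hNum.div hDen hne0
  have : deriv g1ex 0 = _ := hq.deriv
  rw [this]
  rw [Dex, Ddex]
  norm_num


theorem F3_gamma2 :
    (∀ f : ℂ → ℂ, AnalyticOn ℂ f (ball 0 1) → f 0 = 0 → deriv f 0 = 1 →
      (∀ z ∈ ball (0:ℂ) 1, 0 < ((1 - z + z^2) * deriv f z).re) →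
      ‖(iteratedDeriv 3 f 0 / 6 - (iteratedDeriv 2 f 0 / 2) ^ 2 / 2) / 2‖ ≤ 2/5) ∧
    ∃ f : ℂ → ℂ, AnalyticOn ℂ f (ball 0 1) ∧ f 0 = 0 ∧ deriv f 0 = 1 ∧
      (∀ z ∈ ball (0:ℂ) 1, 0 < ((1 - z + z^2) * deriv f z).re) ∧
      ‖(iteratedDeriv 3 f 0 / 6 - (iteratedDeriv 2 f 0 / 2) ^ 2 / 2) / 2‖ = 2/5 := by
  constructor
  · intro f hf h0 h1 hre
    exact F3_bound f hf h0 h1 hre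
  · refine ⟨fext, fext_analytic.analyticOn, fext0, deriv_fext0,
      fun z hz => re_pos_fext hz, ?_⟩
    rw [iter3_fext, iter2_fext]
    rw [show ((-108/25:ℂ)/6 - ((4/5:ℂ)/2)^2/2)/2 = ((-2/5 : ℝ) : ℂ) from by norm_num]
    rw [Complex.norm_real, Real.norm_eq_abs]
    norm_num
end
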